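/- arXiv:1501.05985 — 2 statements merged into one kernel-verified Lean document; each statement's English description precedes it below -/
import Mathlib

section
/- For every f in S² = { f holomorphic on D : f' ∈ H² }, one has the sup-norm bound ‖f‖_∞ ≤ 2‖f‖_{S²}, where ‖f‖²_{S²} = ‖f'‖²_{H²} + ‖f‖²_{H²}. -/
open scoped BigOperators

/-- The `H²` norm of a Taylor-coefficient sequence: `√(Σ |aₙ|²)`. -/
noncomputable def h2norm (a : ℕ → ℂ) : ℝ := Real.sqrt (∑' n, ‖a n‖ ^ 2)

/-- Membership in the Hardy space `H²`: square-summable Taylor coefficients. -/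
def memH2 (a : ℕ → ℂ) : Prop := Summable fun n => ‖a n‖ ^ 2

/-- Taylor coefficients of the derivative: if `f = Σ aₙ zⁿ` then `f' = Σ (n+1)aₙ₊₁ zⁿ`. -/
noncomputable def dcoeff (a : ℕ → ℂ) : ℕ → ℂ := fun n => ((n : ℂ) + 1) * a (n + 1)

/-- Membership in `S² = {f holomorphic on D : f' ∈ H²}`. -/
def memS2 (a : ℕ → ℂ) : Prop := memH2 a ∧ memH2 (dcoeff a)

/-- The `S²` norm: `‖f‖²_{S²} = ‖f'‖²_{H²} + ‖f‖²_{H²}`. -/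
noncomputable def s2norm (a : ℕ → ℂ) : ℝ :=
  Real.sqrt (h2norm (dcoeff a) ^ 2 + h2norm a ^ 2)

lemma tele_hasSum : HasSum (fun n : ℕ => (4:ℝ)/((n+1)*(n+2))) 4 := by
  have h1 : HasSum (fun n : ℕ => (1:ℝ)/(n+1) - 1/(n+2)) 1 := by
    rw [hasSum_iff_tendsto_nat_of_nonneg]
    · have heq : ∀ n : ℕ, ∑ i ∈ Finset.range n, ((1:ℝ)/(i+1) - 1/(i+2)) = 1 - 1/(n+1) := by
        intro n
        have key := Finset.sum_range_sub' (f := fun i : ℕ => (1:ℝ)/((i:ℝ)+1)) n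
        push_cast at key
        calc ∑ i ∈ Finset.range n, ((1:ℝ)/(i+1) - 1/(i+2))
            = ∑ x ∈ Finset.range n, ((1:ℝ)/(x+1) - 1/(x+1+1)) := by
              apply Finset.sum_congr rfl
              intro i _
              ring_nf
          _ = 1/(0+1) - 1/(n+1) := key
          _ = 1 - 1/(n+1) := by norm_num
      simp only [heq]
      have : Filter.Tendsto (fun n : ℕ => 1/((n:ℝ)+1)) Filter.atTop (nhds 0) :=
        tendsto_one_div_add_atTop_nhds_zero_nat
      simpa using Filter.Tendsto.const_sub 1 this
    · intro i
      have h2 : (1:ℝ)/(i+2) ≤ 1/(i+1) := by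
        apply one_div_le_one_div_of_le (by positivity) (by linarith)
      linarith
  have h4 := h1.mul_left 4
  rw [mul_one] at h4
  have hfun : (fun n : ℕ => (4:ℝ)/((n+1)*(n+2))) = fun i : ℕ => 4 * (1/((i:ℝ)+1) - 1/(i+2)) := by
    funext n
    have h1 : ((n:ℝ)+1) ≠ 0 := by positivity
    have h2 : ((n:ℝ)+2) ≠ 0 := by positivity
    field_simp
    ring
  rw [hfun]
  exact h4

set_option maxHeartbeats 1000000 in
/-- The sup-norm bound `‖f‖_∞ ≤ 2‖f‖_{S²}` for `f ∈ S²`. -/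
theorem S2_sup_norm_bound (a : ℕ → ℂ) (h : memS2 a) :
    ∀ z ∈ Metric.ball (0 : ℂ) 1, ‖∑' n, a n * z ^ n‖ ≤ 2 * s2norm a := by
  intro z hz
  rw [Metric.mem_ball, dist_zero_right] at hz
  set r := ‖z‖ with hrdef
  have hr0 : 0 ≤ r := norm_nonneg z
  have hAs : Summable (fun n => ‖a n‖^2) := h.1
  have hBs : Summable (fun n => ‖dcoeff a n‖^2) := h.2
  set A := ∑' n, ‖a n‖ ^ 2 with hA
  set B := ∑' n, ‖dcoeff a n‖ ^ 2 with hB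
  have hA0 : 0 ≤ A := tsum_nonneg (fun n => sq_nonneg _)
  have hB0 : 0 ≤ B := tsum_nonneg (fun n => sq_nonneg _)
  have hs2 : s2norm a = Real.sqrt (A + B) := by
    rw [s2norm, h2norm, h2norm, Real.sq_sqrt hB0, Real.sq_sqrt hA0, add_comm]
  -- weights
  set w : ℕ → ℝ := fun n => (n:ℝ)^2 + 1 with hwdef
  have hw0 : ∀ n, (0:ℝ) < w n := fun n => by positivity
  set f : ℕ → ℝ := fun n => Real.sqrt (w n) * ‖a n‖ with hfdef
  set g : ℕ → ℝ := fun n => r ^ n / Real.sqrt (w n) with hgdef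
  have hf0 : ∀ n, 0 ≤ f n := fun n => by positivity
  have hg0 : ∀ n, 0 ≤ g n := fun n => by positivity
  have hfg : ∀ n, ‖a n * z ^ n‖ = f n * g n := by
    intro n
    have hs : Real.sqrt (w n) ≠ 0 := by positivity
    rw [norm_mul, norm_pow, ← hrdef, hfdef, hgdef]
    field_simp
  -- f^2 facts
  have hu : (fun n : ℕ => ((n:ℝ)+1)^2 * ‖a (n+1)‖^2) = fun n => ‖dcoeff a n‖^2 := by
    funext n
    rw [dcoeff, norm_mul, mul_pow]
    congr 2
    rw [show ((n:ℂ)+1) = ((n+1 : ℕ) : ℂ) by push_cast; ring, Complex.norm_natCast]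
    push_cast; ring
  have husucc : Summable (fun n : ℕ => ((n:ℝ))^2 * ‖a n‖^2) := by
    have hsucc : Summable (fun n : ℕ => ((n+1:ℕ):ℝ)^2 * ‖a (n+1)‖^2) := by
      apply hBs.congr
      intro n
      rw [← congrFun hu n]
      push_cast
      ring
    exact (summable_nat_add_iff 1).mp hsucc
  have hutsum : ∑' n : ℕ, ((n:ℝ))^2 * ‖a n‖^2 = B := by
    rw [Summable.tsum_eq_zero_add husucc]
    simp only [Nat.cast_zero]
    rw [show ((0:ℝ))^2 * ‖a 0‖^2 = 0 by ring, zero_add, hB]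
    apply tsum_congr
    intro n
    rw [← congrFun hu n]
    push_cast
    ring
  have hf2eq : ∀ n, f n ^ 2 = ‖a n‖^2 + (n:ℝ)^2 * ‖a n‖^2 := by
    intro n
    rw [hfdef, mul_pow, Real.sq_sqrt (hw0 n).le, hwdef]
    ring
  have hf2s : Summable (fun n => f n ^ 2) := by
    simp only [hf2eq]; exact hAs.add husucc
  have hf2sum : ∑' n, f n ^ 2 = A + B := by
    simp only [hf2eq]
    rw [Summable.tsum_add hAs husucc, hutsum]
  -- g^2 facts
  have hg2le : ∀ n, g n ^ 2 ≤ 4/(((n:ℝ)+1)*((n:ℝ)+2)) := by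
    intro n
    have h1 : g n ^ 2 = (r^n)^2 / w n := by
      rw [hgdef, div_pow, Real.sq_sqrt (hw0 n).le]
    rw [h1]
    have hrn : (r^n)^2 ≤ 1 := by
      have : r^n ≤ 1 := pow_le_one₀ hr0 hz.le
      nlinarith [pow_nonneg hr0 n]
    have hw : (0:ℝ) < w n := hw0 n
    have hd : (0:ℝ) < ((n:ℝ)+1)*((n:ℝ)+2) := by positivity
    rw [div_le_div_iff₀ hw hd]
    have hwn : w n = (n:ℝ)^2 + 1 := rfl
    nlinarith [hrn, pow_nonneg hr0 n, sq_nonneg ((n:ℝ)-1)]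
  have hg2s : Summable (fun n => g n ^ 2) :=
    Summable.of_nonneg_of_le (fun n => sq_nonneg _) hg2le tele_hasSum.summable
  have hg2sum : ∑' n, g n ^ 2 ≤ 4 := by
    calc ∑' n, g n ^ 2 ≤ ∑' n : ℕ, (4:ℝ)/(((n:ℝ)+1)*((n:ℝ)+2)) :=
          Summable.tsum_le_tsum hg2le hg2s tele_hasSum.summable
      _ = 4 := tele_hasSum.tsum_eq
  -- main case split
  set X := Real.sqrt (A + B) with hXdef
  have hX0 : 0 ≤ X := Real.sqrt_nonneg _
  rcases eq_or_lt_of_le hX0 with hX | hX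
  · -- X = 0 : all coefficients vanish
    have hle : A + B ≤ 0 := Real.sqrt_eq_zero'.mp hX.symm
    have hA00 : A = 0 := by linarith
    have haz : ∀ n, a n = 0 := by
      intro n
      have h1 : ‖a n‖^2 ≤ A := Summable.le_tsum hAs n (fun m _ => sq_nonneg _)
      have h2 : ‖a n‖^2 = 0 := le_antisymm (hA00 ▸ h1) (sq_nonneg _)
      have : ‖a n‖ = 0 := by nlinarith [norm_nonneg (a n)]
      exact norm_eq_zero.mp this
    simp only [haz, zero_mul, tsum_zero, norm_zero, hs2]
    linarith
  · -- X > 0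
    set l : ℝ := 2 / X with hldef
    have hl : 0 < l := by positivity
    have hbound : ∀ n, f n * g n ≤ (l * f n ^ 2 + g n ^ 2 / l) / 2 := by
      intro n
      have h2l : (0:ℝ) < 2 * l := by linarith
      have key : 2 * l * (f n * g n) ≤ l * (l * f n ^ 2 + g n ^ 2 / l) := by
        have he : l * (l * f n ^ 2 + g n ^ 2 / l) = l^2 * f n^2 + g n ^2 := by
          field_simp
        rw [he]
        nlinarith [sq_nonneg (l * f n - g n)]
      calc f n * g n = (2 * l * (f n * g n)) / (2 * l) := by field_simp
        _ ≤ l * (l * f n ^ 2 + g n ^ 2 / l) / (2 * l) := (div_le_div_iff_of_pos_right h2l).mpr key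
        _ = (l * f n ^ 2 + g n ^ 2 / l) / 2 := by
            rw [mul_comm 2 l, mul_div_mul_left _ _ hl.ne']
    have hrhs_s : Summable (fun n => (l * f n ^ 2 + g n ^ 2 / l) / 2) :=
      (((hf2s.mul_left l).add (hg2s.div_const l)).div_const 2)
    have hnorms : Summable (fun n => ‖a n * z ^ n‖) := by
      apply Summable.of_nonneg_of_le (fun n => norm_nonneg _) _ hrhs_s
      intro n
      rw [hfg n]
      exact hbound n
    have step1 : ‖∑' n, a n * z ^ n‖ ≤ ∑' n, ‖a n * z ^ n‖ :=
      norm_tsum_le_tsum_norm hnorms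
    have step2 : ∑' n, ‖a n * z ^ n‖ ≤ ∑' n, (l * f n ^ 2 + g n ^ 2 / l) / 2 := by
      apply Summable.tsum_le_tsum _ hnorms hrhs_s
      intro n
      rw [hfg n]
      exact hbound n
    have step3 : ∑' n, (l * f n ^ 2 + g n ^ 2 / l) / 2
        = (l * (A + B) + (∑' n, g n ^ 2) / l) / 2 := by
      rw [tsum_div_const, Summable.tsum_add (hf2s.mul_left l) (hg2s.div_const l),
        tsum_mul_left, tsum_div_const, hf2sum]
    have hX2 : X ^ 2 = A + B := Real.sq_sqrt (by linarith)
    have step4 : (l * (A + B) + (∑' n, g n ^ 2) / l) / 2 ≤ 2 * X := by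
      have h1 : l * (A + B) = 2 * X := by
        rw [hldef, ← hX2]; field_simp
      have h2 : (∑' n, g n ^ 2) / l ≤ 2 * X := by
        rw [hldef, div_div_eq_mul_div, div_le_iff₀ (by norm_num : (0:ℝ) < 2)]
        nlinarith [hg2sum, (tsum_nonneg (fun n => sq_nonneg (g n)) : (0:ℝ) ≤ ∑' n, g n ^ 2), hX]
      linarith
    rw [hs2]
    calc ‖∑' n, a n * z ^ n‖ ≤ ∑' n, ‖a n * z ^ n‖ := step1
      _ ≤ ∑' n, (l * f n ^ 2 + g n ^ 2 / l) / 2 := step2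
      _ = (l * (A + B) + (∑' n, g n ^ 2) / l) / 2 := step3
      _ ≤ 2 * X := step4
end

section
/- S² = { f holomorphic on D : f' ∈ H² } is closed under pointwise multiplication, and for all f, g ∈ S², ‖fg‖_{S²} ≤ 4 ‖f‖_{S²} ‖g‖_{S²}. -/
open scoped BigOperators

/-- Cauchy product: Taylor coefficients of the pointwise product `f·g`. -/
noncomputable def mulCoeff (a b : ℕ → ℂ) : ℕ → ℂ :=
  fun n => ∑ k ∈ Finset.range (n + 1), a k * b (n - k)

lemma h2norm_nonneg (a : ℕ → ℂ) : 0 ≤ h2norm a := Real.sqrt_nonneg _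

lemma s2norm_nonneg (a : ℕ → ℂ) : 0 ≤ s2norm a := Real.sqrt_nonneg _

lemma h2norm_sq (a : ℕ → ℂ) : h2norm a ^ 2 = ∑' n, ‖a n‖ ^ 2 :=
  Real.sq_sqrt (tsum_nonneg fun _ => sq_nonneg _)

lemma s2norm_sq (a : ℕ → ℂ) :
    s2norm a ^ 2 = h2norm (dcoeff a) ^ 2 + h2norm a ^ 2 :=
  Real.sq_sqrt (by positivity)

lemma h2_le_s2 (a : ℕ → ℂ) : h2norm a ≤ s2norm a := by
  rw [s2norm]
  exact (Real.le_sqrt (h2norm_nonneg a) (by positivity)).mpr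
    (by nlinarith [sq_nonneg (h2norm (dcoeff a))])

lemma h2d_le_s2 (a : ℕ → ℂ) : h2norm (dcoeff a) ≤ s2norm a := by
  rw [s2norm]
  exact (Real.le_sqrt (h2norm_nonneg _) (by positivity)).mpr
    (by nlinarith [sq_nonneg (h2norm a)])

lemma sum_sq_le_h2sq (a : ℕ → ℂ) (ha : memH2 a) (N : ℕ) :
    ∑ n ∈ Finset.range N, ‖a n‖ ^ 2 ≤ h2norm a ^ 2 := by
  rw [h2norm_sq]
  exact Summable.sum_le_tsum _ (fun _ _ => sq_nonneg _) ha

/-- Young's inequality `ℓ¹ * ℓ² → ℓ²` for the Cauchy product. -/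
lemma conv_bound (c b : ℕ → ℂ) (hc : Summable fun n => ‖c n‖) (hb : memH2 b) :
    memH2 (mulCoeff c b) ∧ h2norm (mulCoeff c b) ≤ (∑' n, ‖c n‖) * h2norm b := by
  set L := ∑' n, ‖c n‖ with hLdef
  set M := h2norm b ^ 2 with hMdef
  have hL0 : 0 ≤ L := tsum_nonneg fun _ => norm_nonneg _
  have hM0 : 0 ≤ M := sq_nonneg _
  have hcpart : ∀ s : Finset ℕ, ∑ k ∈ s, ‖c k‖ ≤ L :=
    fun s => Summable.sum_le_tsum s (fun _ _ => norm_nonneg _) hc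
  have step1 : ∀ n, ‖mulCoeff c b n‖ ≤ ∑ k ∈ Finset.range (n+1), ‖c k‖ * ‖b (n-k)‖ := by
    intro n
    refine (norm_sum_le _ _).trans ?_
    exact Finset.sum_le_sum fun k _ => by rw [norm_mul]
  have step2 : ∀ n, (∑ k ∈ Finset.range (n+1), ‖c k‖ * ‖b (n-k)‖) ^ 2
      ≤ L * ∑ k ∈ Finset.range (n+1), ‖c k‖ * ‖b (n-k)‖ ^ 2 := by
    intro n
    have cs := Finset.sum_mul_sq_le_sq_mul_sq (Finset.range (n+1))
      (fun k => Real.sqrt ‖c k‖) (fun k => Real.sqrt ‖c k‖ * ‖b (n-k)‖)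
    have e1 : ∀ k : ℕ, Real.sqrt ‖c k‖ * (Real.sqrt ‖c k‖ * ‖b (n-k)‖) = ‖c k‖ * ‖b (n-k)‖ := by
      intro k; rw [← mul_assoc, Real.mul_self_sqrt (norm_nonneg _)]
    have e2 : ∀ k : ℕ, (Real.sqrt ‖c k‖) ^ 2 = ‖c k‖ := fun k => Real.sq_sqrt (norm_nonneg _)
    have e3 : ∀ k : ℕ, (Real.sqrt ‖c k‖ * ‖b (n-k)‖) ^ 2 = ‖c k‖ * ‖b (n-k)‖ ^ 2 := by
      intro k; rw [mul_pow, e2]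
    simp only [e1, e2, e3] at cs
    refine cs.trans ?_
    refine mul_le_mul_of_nonneg_right (hcpart _) ?_
    exact Finset.sum_nonneg fun k _ => by positivity
  have key : ∀ N, ∑ n ∈ Finset.range N, ‖mulCoeff c b n‖ ^ 2 ≤ L ^ 2 * M := by
    intro N
    have h1 : ∑ n ∈ Finset.range N, ‖mulCoeff c b n‖ ^ 2
        ≤ L * ∑ n ∈ Finset.range N, ∑ k ∈ Finset.range (n+1), ‖c k‖ * ‖b (n-k)‖ ^ 2 := by
      rw [Finset.mul_sum]
      refine Finset.sum_le_sum fun n _ => ?_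
      refine le_trans ?_ (step2 n)
      exact pow_le_pow_left₀ (norm_nonneg _) (step1 n) 2
    have h2 : ∑ n ∈ Finset.range N, ∑ k ∈ Finset.range (n+1), ‖c k‖ * ‖b (n-k)‖ ^ 2
        = ∑ m ∈ Finset.range N, ∑ k ∈ Finset.range (N-m), ‖c m‖ * ‖b k‖ ^ 2 :=
      Finset.sum_range_diag_flip N (fun k j => ‖c k‖ * ‖b j‖ ^ 2)
    have h3 : ∑ m ∈ Finset.range N, ∑ k ∈ Finset.range (N-m), ‖c m‖ * ‖b k‖ ^ 2 ≤ L * M := by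
      have hstep : ∀ m ∈ Finset.range N,
          ∑ k ∈ Finset.range (N-m), ‖c m‖ * ‖b k‖ ^ 2 ≤ ‖c m‖ * M := by
        intro m _
        rw [← Finset.mul_sum]
        exact mul_le_mul_of_nonneg_left (sum_sq_le_h2sq b hb (N-m)) (norm_nonneg _)
      refine le_trans (Finset.sum_le_sum hstep) ?_
      rw [← Finset.sum_mul]
      exact mul_le_mul_of_nonneg_right (hcpart _) hM0
    calc ∑ n ∈ Finset.range N, ‖mulCoeff c b n‖ ^ 2
        ≤ L * ∑ n ∈ Finset.range N, ∑ k ∈ Finset.range (n+1), ‖c k‖ * ‖b (n-k)‖ ^ 2 := h1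
      _ = L * ∑ m ∈ Finset.range N, ∑ k ∈ Finset.range (N-m), ‖c m‖ * ‖b k‖ ^ 2 := by rw [h2]
      _ ≤ L * (L * M) := mul_le_mul_of_nonneg_left h3 hL0
      _ = L ^ 2 * M := by ring
  have hsum : memH2 (mulCoeff c b) :=
    summable_of_sum_range_le (fun n => sq_nonneg _) key
  refine ⟨hsum, ?_⟩
  have ht : ∑' n, ‖mulCoeff c b n‖ ^ 2 ≤ L ^ 2 * M :=
    Real.tsum_le_of_sum_range_le (fun n => sq_nonneg _) key
  calc h2norm (mulCoeff c b) = Real.sqrt (∑' n, ‖mulCoeff c b n‖ ^ 2) := rfl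
    _ ≤ Real.sqrt (L ^ 2 * M) := Real.sqrt_le_sqrt ht
    _ = L * h2norm b := by
        rw [hMdef, Real.sqrt_mul (sq_nonneg L), Real.sqrt_sq hL0,
          Real.sqrt_sq (h2norm_nonneg b)]

lemma basel_aux : ∀ N : ℕ, ∑ n ∈ Finset.range N, (1/((n:ℝ)+1)) ^ 2 ≤ 2 := by
  intro N
  have hptwise : ∀ n : ℕ, (1/((n:ℝ)+1)) ^ 2 ≤ 2 * (1/((n:ℝ)+1) - 1/((n:ℝ)+2)) := by
    intro n
    have h1 : (0:ℝ) < (n:ℝ) + 1 := by positivity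
    have h2 : (0:ℝ) < (n:ℝ) + 2 := by positivity
    rw [div_sub_div _ _ (ne_of_gt h1) (ne_of_gt h2), div_pow, ← mul_div_assoc,
      div_le_div_iff₀ (by positivity) (by positivity)]
    ring_nf
    nlinarith [sq_nonneg ((n:ℝ))]
  have htel : ∑ n ∈ Finset.range N, (1/((n:ℝ)+1) - 1/((n:ℝ)+2)) = 1 - 1/((N:ℝ)+1) := by
    have h := Finset.sum_range_sub' (fun n : ℕ => 1/((n:ℝ)+1)) N
    have e : ∀ n : ℕ, 1/((n:ℝ)+1) - 1/(((n+1:ℕ):ℝ)+1) = 1/((n:ℝ)+1) - 1/((n:ℝ)+2) := by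
      intro n; push_cast; ring_nf
    rw [Finset.sum_congr rfl fun n _ => (e n).symm]
    rw [h]
    norm_num
  calc ∑ n ∈ Finset.range N, (1/((n:ℝ)+1)) ^ 2
      ≤ ∑ n ∈ Finset.range N, 2 * (1/((n:ℝ)+1) - 1/((n:ℝ)+2)) :=
        Finset.sum_le_sum fun n _ => hptwise n
    _ = 2 * (1 - 1/((N:ℝ)+1)) := by rw [← Finset.mul_sum, htel]
    _ ≤ 2 := by
        have : (0:ℝ) ≤ 1/((N:ℝ)+1) := by positivity
        linarith

/-- The `ℓ¹` bound `‖a‖₁ ≤ √3 ‖a‖_{S²}` (the coefficient form of `‖f‖_∞ ≤ 2‖f‖_{S²}`). -/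
lemma l1_bound (a : ℕ → ℂ) (ha : memS2 a) :
    Summable (fun n => ‖a n‖) ∧ ∑' n, ‖a n‖ ≤ Real.sqrt 3 * s2norm a := by
  classical
  set w : ℕ → ℝ := fun n => if n = 0 then 1 else 1/(n:ℝ) with hw
  set v : ℕ → ℝ := fun n => if n = 0 then ‖a 0‖ else (n:ℝ) * ‖a n‖ with hv
  have hwv : ∀ n, ‖a n‖ = w n * v n := by
    intro n
    cases n with
    | zero => simp [hw, hv]
    | succ m =>
      have h1 : ((m:ℝ)+1) ≠ 0 := by positivity
      simp only [hw, hv, if_neg (Nat.succ_ne_zero m)]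
      push_cast
      field_simp
  have hw2 : ∀ N, ∑ n ∈ Finset.range N, w n ^ 2 ≤ 3 := by
    intro N
    cases N with
    | zero => simp
    | succ M =>
      rw [Finset.sum_range_succ' (fun n => w n ^ 2) M]
      have h0 : w 0 ^ 2 = 1 := by simp [hw]
      have hs : ∀ i : ℕ, w (i+1) ^ 2 = (1/((i:ℝ)+1)) ^ 2 := by
        intro i; simp only [hw, if_neg (Nat.succ_ne_zero i)]; push_cast; ring
      rw [h0]
      have := basel_aux M
      calc (∑ i ∈ Finset.range M, w (i+1) ^ 2) + 1
          = (∑ i ∈ Finset.range M, (1/((i:ℝ)+1)) ^ 2) + 1 := by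
            rw [Finset.sum_congr rfl fun i _ => hs i]
        _ ≤ 2 + 1 := by linarith
        _ = 3 := by norm_num
  have hv2 : ∀ N, ∑ n ∈ Finset.range N, v n ^ 2 ≤ s2norm a ^ 2 := by
    intro N
    cases N with
    | zero => simp [s2norm_sq]; positivity
    | succ M =>
      rw [Finset.sum_range_succ' (fun n => v n ^ 2) M]
      have h0 : v 0 ^ 2 = ‖a 0‖ ^ 2 := by simp [hv]
      have hs : ∀ i : ℕ, v (i+1) ^ 2 = ‖dcoeff a i‖ ^ 2 := by
        intro i
        simp only [hv, if_neg (Nat.succ_ne_zero i), dcoeff]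
        rw [norm_mul]
        have : ‖((i:ℂ)+1)‖ = (i:ℝ) + 1 := by
          rw [show ((i:ℂ)+1) = ((i+1 : ℕ) : ℂ) by push_cast; ring, Complex.norm_natCast]
          push_cast; ring
        rw [this]
        push_cast; ring
      have hd : ∑ i ∈ Finset.range M, v (i+1) ^ 2 ≤ h2norm (dcoeff a) ^ 2 := by
        rw [Finset.sum_congr rfl fun i _ => hs i]
        exact sum_sq_le_h2sq _ ha.2 M
      have ha0 : v 0 ^ 2 ≤ h2norm a ^ 2 := by
        rw [h0, h2norm_sq]
        exact Summable.le_tsum ha.1 0 fun j _ => sq_nonneg _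
      rw [s2norm_sq]
      linarith
  have key : ∀ N, ∑ n ∈ Finset.range N, ‖a n‖ ≤ Real.sqrt 3 * s2norm a := by
    intro N
    have hcs := Finset.sum_mul_sq_le_sq_mul_sq (Finset.range N) w v
    have hsq : (∑ n ∈ Finset.range N, ‖a n‖) ^ 2 ≤ 3 * s2norm a ^ 2 := by
      calc (∑ n ∈ Finset.range N, ‖a n‖) ^ 2
          = (∑ n ∈ Finset.range N, w n * v n) ^ 2 := by
            rw [Finset.sum_congr rfl fun n _ => hwv n]
        _ ≤ (∑ n ∈ Finset.range N, w n ^ 2) * ∑ n ∈ Finset.range N, v n ^ 2 := hcs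
        _ ≤ 3 * s2norm a ^ 2 := by
            have h1 := hw2 N
            have h2 := hv2 N
            have hnn : (0:ℝ) ≤ ∑ n ∈ Finset.range N, v n ^ 2 :=
              Finset.sum_nonneg fun n _ => sq_nonneg _
            nlinarith
    have hnn : (0:ℝ) ≤ ∑ n ∈ Finset.range N, ‖a n‖ :=
      Finset.sum_nonneg fun n _ => norm_nonneg _
    have hle : ∑ n ∈ Finset.range N, ‖a n‖ ≤ Real.sqrt (3 * s2norm a ^ 2) :=
      (Real.le_sqrt hnn (by positivity)).mpr hsq
    calc ∑ n ∈ Finset.range N, ‖a n‖ ≤ Real.sqrt (3 * s2norm a ^ 2) := hle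
      _ = Real.sqrt 3 * s2norm a := by
          rw [Real.sqrt_mul (by norm_num : (0:ℝ) ≤ 3), Real.sqrt_sq (s2norm_nonneg a)]
  exact ⟨summable_of_sum_range_le (fun n => norm_nonneg _) key,
    Real.tsum_le_of_sum_range_le (fun n => norm_nonneg _) key⟩

lemma mulCoeff_comm (a b : ℕ → ℂ) : mulCoeff a b = mulCoeff b a := by
  funext n
  show ∑ k ∈ Finset.range (n+1), a k * b (n - k) = ∑ k ∈ Finset.range (n+1), b k * a (n - k)
  rw [← Finset.sum_range_reflect (fun k => b k * a (n - k)) (n+1)]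
  refine Finset.sum_congr rfl fun k hk => ?_
  have hk' : k ≤ n := Nat.lt_succ_iff.mp (Finset.mem_range.mp hk)
  have e1 : n + 1 - 1 - k = n - k := by omega
  have e2 : n - (n - k) = k := by omega
  rw [e1, e2, mul_comm]

/-- The Leibniz rule at the level of Taylor coefficients. -/
lemma leibniz (a b : ℕ → ℂ) :
    dcoeff (mulCoeff a b)
      = fun n => mulCoeff (dcoeff a) b n + mulCoeff a (dcoeff b) n := by
  funext n
  have e1 : mulCoeff (dcoeff a) b n
      = ∑ k ∈ Finset.range (n+2), (k:ℂ) * a k * b (n+1-k) := by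
    rw [Finset.sum_range_succ' (fun k => (k:ℂ) * a k * b (n+1-k)) (n+1)]
    simp only [Nat.cast_zero, zero_mul, Nat.cast_add, Nat.cast_one, add_zero]
    refine Finset.sum_congr rfl fun k hk => ?_
    have : n + 1 - (k+1) = n - k := by omega
    rw [this]
    simp [dcoeff]
  have e2 : mulCoeff a (dcoeff b) n
      = ∑ k ∈ Finset.range (n+2), ((n+1-k : ℕ):ℂ) * a k * b (n+1-k) := by
    rw [Finset.sum_range_succ (fun k => ((n+1-k : ℕ):ℂ) * a k * b (n+1-k)) (n+1)]
    have hz : ((n+1-(n+1) : ℕ):ℂ) * a (n+1) * b (n+1-(n+1)) = 0 := by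
      simp
    rw [hz, add_zero]
    refine Finset.sum_congr rfl fun k hk => ?_
    have hk' : k ≤ n := Nat.lt_succ_iff.mp (Finset.mem_range.mp hk)
    have h1 : n + 1 - k = (n - k) + 1 := by omega
    rw [h1]
    simp only [mulCoeff, dcoeff]
    push_cast
    ring
  show ((n:ℂ)+1) * mulCoeff a b (n+1) = _
  rw [e1, e2, ← Finset.sum_add_distrib]
  show ((n:ℂ)+1) * ∑ k ∈ Finset.range (n+1+1), a k * b (n+1-k) = _
  rw [Finset.mul_sum]
  refine Finset.sum_congr rfl fun k hk => ?_
  have hk' : k ≤ n + 1 := Nat.lt_succ_iff.mp (Finset.mem_range.mp hk)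
  have hc : ((n+1-k : ℕ):ℂ) = ((n:ℂ)+1) - (k:ℂ) := by
    rw [Nat.cast_sub hk']
    push_cast; ring
  rw [hc]
  ring

/-- Minkowski's inequality for the `H²` norm. -/
lemma h2_add (x y : ℕ → ℂ) (hx : memH2 x) (hy : memH2 y) :
    memH2 (fun n => x n + y n) ∧
      h2norm (fun n => x n + y n) ≤ h2norm x + h2norm y := by
  have key : ∀ N, ∑ n ∈ Finset.range N, ‖x n + y n‖ ^ 2 ≤ (h2norm x + h2norm y) ^ 2 := by
    intro N
    set X : EuclideanSpace ℂ (Fin N) := WithLp.toLp 2 (fun i => x i) with hX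
    set Y : EuclideanSpace ℂ (Fin N) := WithLp.toLp 2 (fun i => y i) with hY
    have tri : ‖X + Y‖ ≤ ‖X‖ + ‖Y‖ := norm_add_le X Y
    have nX : ‖X‖ = Real.sqrt (∑ n ∈ Finset.range N, ‖x n‖ ^ 2) := by
      rw [EuclideanSpace.norm_eq, Finset.sum_range]
    have nY : ‖Y‖ = Real.sqrt (∑ n ∈ Finset.range N, ‖y n‖ ^ 2) := by
      rw [EuclideanSpace.norm_eq, Finset.sum_range]
    have nXY : ‖X + Y‖ = Real.sqrt (∑ n ∈ Finset.range N, ‖x n + y n‖ ^ 2) := by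
      rw [EuclideanSpace.norm_eq, Finset.sum_range]
      simp only [PiLp.add_apply]
      rfl
    have hXle : ‖X‖ ≤ h2norm x := by
      rw [nX]
      calc Real.sqrt (∑ n ∈ Finset.range N, ‖x n‖ ^ 2)
          ≤ Real.sqrt (h2norm x ^ 2) := Real.sqrt_le_sqrt (sum_sq_le_h2sq x hx N)
        _ = h2norm x := Real.sqrt_sq (h2norm_nonneg x)
    have hYle : ‖Y‖ ≤ h2norm y := by
      rw [nY]
      calc Real.sqrt (∑ n ∈ Finset.range N, ‖y n‖ ^ 2)
          ≤ Real.sqrt (h2norm y ^ 2) := Real.sqrt_le_sqrt (sum_sq_le_h2sq y hy N)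
        _ = h2norm y := Real.sqrt_sq (h2norm_nonneg y)
    have hle : Real.sqrt (∑ n ∈ Finset.range N, ‖x n + y n‖ ^ 2) ≤ h2norm x + h2norm y := by
      rw [← nXY]; linarith
    have h0 : (0:ℝ) ≤ ∑ n ∈ Finset.range N, ‖x n + y n‖ ^ 2 :=
      Finset.sum_nonneg fun n _ => sq_nonneg _
    calc ∑ n ∈ Finset.range N, ‖x n + y n‖ ^ 2
        = Real.sqrt (∑ n ∈ Finset.range N, ‖x n + y n‖ ^ 2) ^ 2 := (Real.sq_sqrt h0).symm
      _ ≤ (h2norm x + h2norm y) ^ 2 := by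
          have := Real.sqrt_nonneg (∑ n ∈ Finset.range N, ‖x n + y n‖ ^ 2)
          exact pow_le_pow_left₀ this hle 2
  refine ⟨summable_of_sum_range_le (fun n => sq_nonneg _) key, ?_⟩
  have ht := Real.tsum_le_of_sum_range_le (f := fun n => ‖x n + y n‖ ^ 2)
    (fun n => sq_nonneg _) key
  calc h2norm (fun n => x n + y n) = Real.sqrt (∑' n, ‖x n + y n‖ ^ 2) := rfl
    _ ≤ Real.sqrt ((h2norm x + h2norm y) ^ 2) := Real.sqrt_le_sqrt ht
    _ = h2norm x + h2norm y := Real.sqrt_sq (add_nonneg (h2norm_nonneg x) (h2norm_nonneg y))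

/-- `S²` is closed under pointwise multiplication and `‖fg‖_{S²} ≤ 4‖f‖_{S²}‖g‖_{S²}`. -/
theorem S2_closed_under_multiplication (a b : ℕ → ℂ) (ha : memS2 a) (hb : memS2 b) :
    memS2 (mulCoeff a b) ∧ s2norm (mulCoeff a b) ≤ 4 * s2norm a * s2norm b := by
  obtain ⟨hsa, hLa⟩ := l1_bound a ha
  obtain ⟨hsb, hLb⟩ := l1_bound b hb
  obtain ⟨hm1, hn1⟩ := conv_bound a b hsa hb.1
  obtain ⟨hm2, hn2⟩ := conv_bound b (dcoeff a) hsb ha.2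
  obtain ⟨hm3, hn3⟩ := conv_bound a (dcoeff b) hsa hb.2
  have hcomm : mulCoeff (dcoeff a) b = mulCoeff b (dcoeff a) := mulCoeff_comm _ _
  have hlb := leibniz a b
  have hm2' : memH2 (mulCoeff (dcoeff a) b) := by rw [hcomm]; exact hm2
  obtain ⟨hmadd, hnadd⟩ := h2_add _ _ hm2' hm3
  have hmemd : memH2 (dcoeff (mulCoeff a b)) := by rw [hlb]; exact hmadd
  refine ⟨⟨hm1, hmemd⟩, ?_⟩
  have hA0 : 0 ≤ s2norm a := s2norm_nonneg a
  have hB0 : 0 ≤ s2norm b := s2norm_nonneg b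
  have h30 : (0:ℝ) ≤ Real.sqrt 3 := Real.sqrt_nonneg 3
  have hsq3 : Real.sqrt 3 ^ 2 = 3 := Real.sq_sqrt (by norm_num)
  have b1 : h2norm (mulCoeff a b) ≤ Real.sqrt 3 * s2norm a * s2norm b := by
    calc h2norm (mulCoeff a b) ≤ (∑' n, ‖a n‖) * h2norm b := hn1
      _ ≤ (Real.sqrt 3 * s2norm a) * s2norm b :=
          mul_le_mul hLa (h2_le_s2 b) (h2norm_nonneg b) (by positivity)
      _ = Real.sqrt 3 * s2norm a * s2norm b := by ring
  have b2 : h2norm (dcoeff (mulCoeff a b)) ≤ 2 * Real.sqrt 3 * s2norm a * s2norm b := by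
    rw [hlb]
    refine hnadd.trans ?_
    have c2 : h2norm (mulCoeff (dcoeff a) b) ≤ Real.sqrt 3 * s2norm b * s2norm a := by
      rw [hcomm]
      calc h2norm (mulCoeff b (dcoeff a)) ≤ (∑' n, ‖b n‖) * h2norm (dcoeff a) := hn2
        _ ≤ (Real.sqrt 3 * s2norm b) * s2norm a :=
            mul_le_mul hLb (h2d_le_s2 a) (h2norm_nonneg _) (by positivity)
    have c3 : h2norm (mulCoeff a (dcoeff b)) ≤ Real.sqrt 3 * s2norm a * s2norm b := by
      calc h2norm (mulCoeff a (dcoeff b)) ≤ (∑' n, ‖a n‖) * h2norm (dcoeff b) := hn3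
        _ ≤ (Real.sqrt 3 * s2norm a) * s2norm b :=
            mul_le_mul hLa (h2d_le_s2 b) (h2norm_nonneg _) (by positivity)
    calc h2norm (mulCoeff (dcoeff a) b) + h2norm (mulCoeff a (dcoeff b))
        ≤ Real.sqrt 3 * s2norm b * s2norm a + Real.sqrt 3 * s2norm a * s2norm b :=
          add_le_add c2 c3
      _ = 2 * Real.sqrt 3 * s2norm a * s2norm b := by ring
  have hD0 := h2norm_nonneg (dcoeff (mulCoeff a b))
  have hH0 := h2norm_nonneg (mulCoeff a b)
  have hbound : h2norm (dcoeff (mulCoeff a b)) ^ 2 + h2norm (mulCoeff a b) ^ 2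
      ≤ (4 * s2norm a * s2norm b) ^ 2 := by
    have d2 : h2norm (dcoeff (mulCoeff a b)) ^ 2 ≤ (2 * Real.sqrt 3 * s2norm a * s2norm b) ^ 2 :=
      pow_le_pow_left₀ hD0 b2 2
    have h2' : h2norm (mulCoeff a b) ^ 2 ≤ (Real.sqrt 3 * s2norm a * s2norm b) ^ 2 :=
      pow_le_pow_left₀ hH0 b1 2
    nlinarith [hsq3, sq_nonneg (s2norm a * s2norm b)]
  calc s2norm (mulCoeff a b)
      = Real.sqrt (h2norm (dcoeff (mulCoeff a b)) ^ 2 + h2norm (mulCoeff a b) ^ 2) := rfl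
    _ ≤ Real.sqrt ((4 * s2norm a * s2norm b) ^ 2) := Real.sqrt_le_sqrt hbound
    _ = 4 * s2norm a * s2norm b := Real.sqrt_sq (by positivity)
end
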